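/- arXiv:2305.12269 — 3 statements merged into one kernel-verified Lean document; each statement's English description precedes it below -/
import Mathlib

section
/- Necessary condition 2 for the triangle averaging operator: if T_1 : L^p × L^q → L^r is bounded, then 1/p + 1/q ≤ d/r. In particular, testing on indicator functions of the annulus A_δ = {x : 1-δ ≤ |x| ≤ 1+δ} shows T_1(χ_{A_δ}, χ_{A_δ})(x) = 1 for all |x| < δ. -/
open MeasureTheory Metric Filter
open scoped ENNReal NNReal

noncomputable section

variable (d : ℕ)


/-- The product measurable structure on `d × d` real matrices. -/
instance matrixMeasurableSpace : MeasurableSpace (Matrix (Fin d) (Fin d) ℝ) :=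
  inferInstanceAs (MeasurableSpace (Fin d → Fin d → ℝ))

/-- Action of a matrix on a point of `ℝ^d`. -/
def rotAct (R : Matrix (Fin d) (Fin d) ℝ) (u : EuclideanSpace ℝ (Fin d)) :
    EuclideanSpace ℝ (Fin d) := WithLp.toLp 2 (R.mulVec u)

/-- The triangle averaging operator
`T₁(f,g)(x) = ∫_{O(d)} f(x - Ru) g(x - Rv) dμ(R)`. -/
def triangleAvg (μ : Measure (Matrix (Fin d) (Fin d) ℝ)) (u v : EuclideanSpace ℝ (Fin d))
    (f g : EuclideanSpace ℝ (Fin d) → ℝ) (x : EuclideanSpace ℝ (Fin d)) : ℝ :=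
  ∫ R, f (x - rotAct d R u) * g (x - rotAct d R v) ∂μ

/-- The annulus `A_δ = {x : 1-δ ≤ |x| ≤ 1+δ}`. -/
def annulus (δ : ℝ) : Set (EuclideanSpace ℝ (Fin d)) := {y | 1 - δ ≤ ‖y‖ ∧ ‖y‖ ≤ 1 + δ}

section Aux

open Finset in
lemma pow_diff_le_aux {d : ℕ} (hd : 1 ≤ d) {δ : ℝ} (hδ0 : 0 ≤ δ) (hδ1 : δ ≤ 1) :
    (1 + δ) ^ d - (1 - δ) ^ d ≤ (d : ℝ) * 2 ^ d * δ := by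
  have hg := geom_sum₂_mul (1 + δ) (1 - δ) d
  have hsub : (1 + δ) - (1 - δ) = 2 * δ := by ring
  rw [hsub] at hg
  have hterm : ∀ i ∈ Finset.range d, (1 + δ) ^ i * (1 - δ) ^ (d - 1 - i) ≤ (2:ℝ) ^ (d - 1) := by
    intro i hi
    have h1 : (1 + δ) ^ i ≤ (2:ℝ) ^ i := pow_le_pow_left₀ (by linarith) (by linarith) i
    have h2 : (1 - δ) ^ (d - 1 - i) ≤ (1:ℝ) := pow_le_one₀ (by linarith) (by linarith)
    have h3 : (2:ℝ) ^ i ≤ 2 ^ (d - 1) :=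
      pow_le_pow_right₀ (by norm_num) (Nat.le_sub_one_of_lt (Finset.mem_range.mp hi))
    calc (1 + δ) ^ i * (1 - δ) ^ (d - 1 - i) ≤ 2 ^ i * 1 :=
          mul_le_mul h1 h2 (pow_nonneg (by linarith) _) (by positivity)
      _ = 2 ^ i := mul_one _
      _ ≤ 2 ^ (d - 1) := h3
  have hsum : (∑ i ∈ Finset.range d, (1 + δ) ^ i * (1 - δ) ^ (d - 1 - i)) ≤ (d : ℝ) * 2 ^ (d - 1) := by
    calc (∑ i ∈ Finset.range d, (1 + δ) ^ i * (1 - δ) ^ (d - 1 - i))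
        ≤ ∑ _i ∈ Finset.range d, (2:ℝ) ^ (d - 1) := Finset.sum_le_sum hterm
      _ = (d : ℝ) * 2 ^ (d - 1) := by simp [Finset.sum_const, nsmul_eq_mul]
  have h2d : (2:ℝ) ^ (d - 1) * 2 = 2 ^ d := by
    rw [← pow_succ, Nat.sub_add_cancel hd]
  calc (1 + δ) ^ d - (1 - δ) ^ d
      = (∑ i ∈ Finset.range d, (1 + δ) ^ i * (1 - δ) ^ (d - 1 - i)) * (2 * δ) := hg.symm
    _ ≤ ((d : ℝ) * 2 ^ (d - 1)) * (2 * δ) :=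
        mul_le_mul_of_nonneg_right hsum (by positivity)
    _ = (d : ℝ) * (2 ^ (d - 1) * 2) * δ := by ring
    _ = (d : ℝ) * 2 ^ d * δ := by rw [h2d]

lemma exp_le_aux {a b c₁ c₂ : ℝ} (hc₁ : 0 < c₁)
    (h : ∀ δ : ℝ, 0 < δ → δ ≤ 1 → c₁ * δ ^ a ≤ c₂ * δ ^ b) : b ≤ a := by
  by_contra hab
  push_neg at hab
  have ht : 0 < b - a := by linarith
  have hc2 : 0 < c₂ := by
    have h1 := h 1 one_pos le_rfl
    rw [Real.one_rpow, Real.one_rpow] at h1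
    linarith
  set ε := (c₁ / (2 * c₂)) ^ (1 / (b - a)) with hε
  have hεpos : 0 < ε := Real.rpow_pos_of_pos (by positivity) _
  set δ := min 1 ε with hδ
  have hδ0 : 0 < δ := lt_min one_pos hεpos
  have hδ1 : δ ≤ 1 := min_le_left _ _
  have key := h δ hδ0 hδ1
  have hsplit : δ ^ b = δ ^ a * δ ^ (b - a) := by
    rw [← Real.rpow_add hδ0]; ring_nf
  have hpa : 0 < δ ^ a := Real.rpow_pos_of_pos hδ0 _
  have h2 : c₁ ≤ c₂ * δ ^ (b - a) := by
    have h3 : c₁ * δ ^ a ≤ (c₂ * δ ^ (b - a)) * δ ^ a := by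
      rw [hsplit] at key; nlinarith [key]
    exact le_of_mul_le_mul_right h3 hpa
  have hεb : δ ^ (b - a) ≤ c₁ / (2 * c₂) := by
    have hle : δ ^ (b - a) ≤ ε ^ (b - a) :=
      Real.rpow_le_rpow hδ0.le (min_le_right _ _) ht.le
    have heq : ε ^ (b - a) = c₁ / (2 * c₂) := by
      rw [hε, ← Real.rpow_mul (by positivity), one_div, inv_mul_cancel₀ ht.ne', Real.rpow_one]
    linarith [hle, heq.le]
  have : c₂ * δ ^ (b - a) ≤ c₂ * (c₁ / (2 * c₂)) := mul_le_mul_of_nonneg_left hεb hc2.le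
  have hhalf : c₂ * (c₁ / (2 * c₂)) = c₁ / 2 := by field_simp
  linarith

lemma rotAct_norm {d : ℕ} {R : Matrix (Fin d) (Fin d) ℝ}
    (hR : R ∈ Matrix.orthogonalGroup (Fin d) ℝ) (w : EuclideanSpace ℝ (Fin d)) :
    ‖rotAct d R w‖ = ‖w‖ := by
  have h1 : star R * R = 1 := (Matrix.mem_orthogonalGroup_iff' (Fin d) ℝ).mp hR
  rw [Matrix.star_eq_conjTranspose, Matrix.conjTranspose_eq_transpose_of_trivial] at h1
  have hdot : dotProduct (R.mulVec w) (R.mulVec w) = dotProduct w w := by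
    rw [Matrix.dotProduct_mulVec, ← Matrix.vecMul_transpose, Matrix.vecMul_vecMul, h1,
      Matrix.vecMul_one]
  simp only [EuclideanSpace.norm_eq]
  congr 1
  simpa [rotAct, dotProduct, pow_two, Real.norm_eq_abs, sq_abs] using hdot

lemma triangleAvg_one {d : ℕ} (μ : Measure (Matrix (Fin d) (Fin d) ℝ)) [IsProbabilityMeasure μ]
    (hμsupp : μ {A | A ∉ Matrix.orthogonalGroup (Fin d) ℝ} = 0)
    (u v : EuclideanSpace ℝ (Fin d)) (hu : ‖u‖ = 1) (hv : ‖v‖ = 1)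
    {δ : ℝ} {x : EuclideanSpace ℝ (Fin d)} (hx : ‖x‖ < δ) :
    triangleAvg d μ u v ((annulus d δ).indicator 1) ((annulus d δ).indicator 1) x = 1 := by
  have hae : ∀ᵐ R ∂μ, R ∈ Matrix.orthogonalGroup (Fin d) ℝ := by
    rw [MeasureTheory.ae_iff]; exact hμsupp
  have hmem : ∀ (R : Matrix (Fin d) (Fin d) ℝ), R ∈ Matrix.orthogonalGroup (Fin d) ℝ →
      ∀ w : EuclideanSpace ℝ (Fin d), ‖w‖ = 1 → x - rotAct d R w ∈ annulus d δ := by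
    intro R hR w hw
    have h1 : ‖rotAct d R w‖ = 1 := (rotAct_norm hR w).trans hw
    constructor
    · have h3 := norm_sub_norm_le (rotAct d R w) x
      rw [h1] at h3
      have h2 : ‖rotAct d R w - x‖ = ‖x - rotAct d R w‖ := norm_sub_rev _ _
      linarith
    · have h3 := norm_sub_le x (rotAct d R w)
      rw [h1] at h3
      linarith
  have hcong : (fun R => ((annulus d δ).indicator 1 (x - rotAct d R u)) *
      ((annulus d δ).indicator 1 (x - rotAct d R v))) =ᵐ[μ] (fun _ => (1:ℝ)) := by
    filter_upwards [hae] with R hR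
    rw [Set.indicator_of_mem (hmem R hR u hu), Set.indicator_of_mem (hmem R hR v hv)]
    simp
  rw [triangleAvg, integral_congr_ae hcong]
  simp

lemma annulus_vol {d : ℕ} (hd : 2 ≤ d) {δ : ℝ} (hδ0 : 0 < δ) (hδ1 : δ ≤ 1) :
    volume (annulus d δ) ≤ ENNReal.ofReal ((d : ℝ) * 2 ^ d * δ) *
      volume (ball (0 : EuclideanSpace ℝ (Fin d)) 1) := by
  haveI : Nontrivial (EuclideanSpace ℝ (Fin d)) :=
    Module.nontrivial_of_finrank_pos (R := ℝ)
      (by rw [finrank_euclideanSpace_fin]; omega)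
  have heq : annulus d δ = closedBall (0 : EuclideanSpace ℝ (Fin d)) (1 + δ) \ ball 0 (1 - δ) := by
    ext y
    simp [annulus, Metric.mem_closedBall, Metric.mem_ball, dist_zero_right, not_lt, and_comm]
  rw [heq, measure_diff (ball_subset_closedBall.trans
      (closedBall_subset_closedBall (by linarith)))
      measurableSet_ball.nullMeasurableSet measure_ball_lt_top.ne,
    Measure.addHaar_ball _ _ (by linarith : (0:ℝ) ≤ 1 - δ),
    Measure.addHaar_closedBall _ _ (by linarith : (0:ℝ) ≤ 1 + δ), finrank_euclideanSpace_fin]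
  rw [tsub_le_iff_right, ← add_mul, ← ENNReal.ofReal_add (by positivity) (pow_nonneg (by linarith) _)]
  refine mul_le_mul_left (ENNReal.ofReal_le_ofReal ?_) _
  have := pow_diff_le_aux (by omega : 1 ≤ d) hδ0.le hδ1
  linarith

end Aux

/-- **Necessary condition 2 for the triangle averaging operator**: if
`T₁ : L^p × L^q → L^r` is bounded then `1/p + 1/q ≤ d/r`.  In particular, testing on
indicator functions of the annulus `A_δ = {x : 1-δ ≤ |x| ≤ 1+δ}` shows
`T₁(χ_{A_δ}, χ_{A_δ})(x) = 1` for all `|x| < δ`. -/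

theorem triangle_necessary_condition_two (hd : 2 ≤ d)
    (μ : Measure (Matrix (Fin d) (Fin d) ℝ)) [IsProbabilityMeasure μ]
    (hμsupp : μ {A | A ∉ Matrix.orthogonalGroup (Fin d) ℝ} = 0)
    (hμinv : ∀ A ∈ Matrix.orthogonalGroup (Fin d) ℝ, μ.map (fun B => A * B) = μ)
    (u v : EuclideanSpace ℝ (Fin d)) (hu : ‖u‖ = 1) (hv : ‖v‖ = 1) (huv : ‖u - v‖ = 1)
    (p q r : ℝ≥0∞) (hp : 1 ≤ p) (hq : 1 ≤ q) (hr : 0 < r)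
    (C : ℝ≥0)
    (hbound : ∀ f g : EuclideanSpace ℝ (Fin d) → ℝ, Measurable f → Measurable g →
      eLpNorm (triangleAvg d μ u v f g) r volume ≤
        C * eLpNorm f p volume * eLpNorm g q volume) :
    1 / p + 1 / q ≤ (d : ℝ≥0∞) / r ∧
      ∀ δ : ℝ, 0 < δ → ∀ x : EuclideanSpace ℝ (Fin d), ‖x‖ < δ →
        triangleAvg d μ u v ((annulus d δ).indicator 1) ((annulus d δ).indicator 1) x = 1 := by
  have hp0 : p ≠ 0 := (lt_of_lt_of_le zero_lt_one hp).ne'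
  have hq0 : q ≠ 0 := (lt_of_lt_of_le zero_lt_one hq).ne'
  have hr0 : r ≠ 0 := hr.ne'
  refine ⟨?_, fun δ hδ x hx => triangleAvg_one μ hμsupp u v hu hv hx⟩
  haveI : Nontrivial (EuclideanSpace ℝ (Fin d)) :=
    Module.nontrivial_of_finrank_pos (R := ℝ) (by rw [finrank_euclideanSpace_fin]; omega)
  have hdR : (0:ℝ) < (d:ℝ) := by exact_mod_cast (by omega : 0 < d)
  set B := volume (ball (0 : EuclideanSpace ℝ (Fin d)) 1) with hBdef
  have hB0 : B ≠ 0 := (measure_ball_pos _ _ one_pos).ne'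
  have hBt : B ≠ ∞ := measure_ball_lt_top.ne
  set ep := 1 / p.toReal with hepdef
  set eq' := 1 / q.toReal with heqdef
  set er := 1 / r.toReal with herdef
  have hep : 0 ≤ ep := by positivity
  have heq' : 0 ≤ eq' := by positivity
  have her : 0 ≤ er := by positivity
  have main : ∀ δ : ℝ, 0 < δ → δ ≤ 1 →
      (B.toReal ^ er) * δ ^ ((d:ℝ) * er) ≤
      ((C : ℝ) * ((d:ℝ) * 2 ^ d) ^ (ep + eq') * B.toReal ^ (ep + eq')) * δ ^ (ep + eq') := by
    intro δ hδ0 hδ1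
    have hmA : MeasurableSet (annulus d δ) := by
      have h : annulus d δ =
          (fun y : EuclideanSpace ℝ (Fin d) => ‖y‖) ⁻¹' (Set.Icc (1 - δ) (1 + δ)) := rfl
      rw [h]; exact measurableSet_Icc.preimage measurable_norm
    have hf : Measurable ((annulus d δ).indicator (1 : EuclideanSpace ℝ (Fin d) → ℝ)) :=
      measurable_one.indicator hmA
    set W := volume (annulus d δ) with hWdef
    have hsub : ball u δ ⊆ annulus d δ := by
      intro y hy
      rw [mem_ball, dist_eq_norm] at hy
      have h1 := norm_sub_norm_le u y
      have h2 := norm_sub_norm_le y u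
      rw [norm_sub_rev] at h1
      constructor
      · linarith [hu]
      · linarith [hu]
    have hW0 : W ≠ 0 :=
      (lt_of_lt_of_le (measure_ball_pos volume u hδ0) (measure_mono hsub)).ne'
    have hWt : W ≠ ∞ :=
      ne_top_of_le_ne_top measure_closedBall_lt_top.ne
        (measure_mono (fun y hy => mem_closedBall_zero_iff.mpr hy.2))
    have hball : volume (ball (0 : EuclideanSpace ℝ (Fin d)) δ) = ENNReal.ofReal (δ ^ d) * B := by
      rw [hBdef, Measure.addHaar_ball _ _ hδ0.le, finrank_euclideanSpace_fin]
    have hlow : (ENNReal.ofReal (δ ^ d) * B) ^ er ≤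
        eLpNorm (triangleAvg d μ u v ((annulus d δ).indicator 1)
          ((annulus d δ).indicator 1)) r volume := by
      have hind : eLpNorm ((ball (0 : EuclideanSpace ℝ (Fin d)) δ).indicator fun _ => (1:ℝ))
          r volume = (ENNReal.ofReal (δ ^ d) * B) ^ er := by
        rw [eLpNorm_indicator_const' measurableSet_ball
          (by rw [hball]; exact mul_ne_zero (ENNReal.ofReal_pos.mpr (by positivity)).ne' hB0)
          hr0, hball]
        simp [herdef]
      rw [← hind]
      apply eLpNorm_mono
      intro x
      by_cases hx : x ∈ ball (0 : EuclideanSpace ℝ (Fin d)) δ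
      · rw [Set.indicator_of_mem hx,
          triangleAvg_one μ hμsupp u v hu hv (mem_ball_zero_iff.mp hx)]
      · rw [Set.indicator_of_notMem hx]
        simp [norm_nonneg]
    have hup := hbound _ _ hf hf
    have hfp : eLpNorm ((annulus d δ).indicator (1 : EuclideanSpace ℝ (Fin d) → ℝ)) p volume
        = W ^ ep := by
      rw [show ((annulus d δ).indicator (1 : EuclideanSpace ℝ (Fin d) → ℝ))
          = (annulus d δ).indicator (fun _ => (1:ℝ)) from rfl,
        eLpNorm_indicator_const' hmA hW0 hp0]
      simp [hepdef, hWdef]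
    have hfq : eLpNorm ((annulus d δ).indicator (1 : EuclideanSpace ℝ (Fin d) → ℝ)) q volume
        = W ^ eq' := by
      rw [show ((annulus d δ).indicator (1 : EuclideanSpace ℝ (Fin d) → ℝ))
          = (annulus d δ).indicator (fun _ => (1:ℝ)) from rfl,
        eLpNorm_indicator_const' hmA hW0 hq0]
      simp [heqdef, hWdef]
    set M := ENNReal.ofReal ((d:ℝ) * 2 ^ d * δ) * B with hMdef
    have hM0 : M ≠ 0 := mul_ne_zero (ENNReal.ofReal_pos.mpr (by positivity)).ne' hB0
    have hMt : M ≠ ∞ := ENNReal.mul_ne_top ENNReal.ofReal_ne_top hBt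
    have hWM : W ≤ M := annulus_vol hd hδ0 hδ1
    have chain : (ENNReal.ofReal (δ ^ d) * B) ^ er ≤ (C : ℝ≥0∞) * M ^ (ep + eq') := by
      calc (ENNReal.ofReal (δ ^ d) * B) ^ er
          ≤ eLpNorm (triangleAvg d μ u v ((annulus d δ).indicator 1)
              ((annulus d δ).indicator 1)) r volume := hlow
        _ ≤ (C : ℝ≥0∞) * eLpNorm ((annulus d δ).indicator 1) p volume *
              eLpNorm ((annulus d δ).indicator 1) q volume := hup
        _ = (C : ℝ≥0∞) * (W ^ ep * W ^ eq') := by rw [hfp, hfq]; ring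
        _ ≤ (C : ℝ≥0∞) * (M ^ ep * M ^ eq') := by
            exact mul_le_mul' le_rfl (mul_le_mul' (ENNReal.rpow_le_rpow hWM hep)
              (ENNReal.rpow_le_rpow hWM heq'))
        _ = (C : ℝ≥0∞) * M ^ (ep + eq') := by rw [← ENNReal.rpow_add _ _ hM0 hMt]
    have hfin : (C : ℝ≥0∞) * M ^ (ep + eq') ≠ ∞ :=
      ENNReal.mul_ne_top ENNReal.coe_ne_top (ENNReal.rpow_ne_top_of_nonneg (by positivity) hMt)
    have hreal := ENNReal.toReal_mono hfin chain
    have e1 : (((ENNReal.ofReal (δ ^ d) * B) ^ er)).toReal = B.toReal ^ er * δ ^ ((d:ℝ) * er) := by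
      rw [← ENNReal.toReal_rpow, ENNReal.toReal_mul, ENNReal.toReal_ofReal (by positivity),
        Real.mul_rpow (by positivity) ENNReal.toReal_nonneg, ← Real.rpow_natCast δ d,
        ← Real.rpow_mul hδ0.le]
      ring
    have e2 : ((C : ℝ≥0∞) * M ^ (ep + eq')).toReal
        = (C : ℝ) * (((d:ℝ) * 2 ^ d) ^ (ep + eq') * B.toReal ^ (ep + eq')) * δ ^ (ep + eq') := by
      rw [ENNReal.toReal_mul, ← ENNReal.toReal_rpow, hMdef, ENNReal.toReal_mul,
        ENNReal.toReal_ofReal (by positivity),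
        Real.mul_rpow (by positivity) ENNReal.toReal_nonneg,
        Real.mul_rpow (by positivity) hδ0.le]
      simp [ENNReal.coe_toReal]
      ring
    rw [e1, e2] at hreal
    exact le_of_le_of_eq hreal (by ring)
  have hba : ep + eq' ≤ (d:ℝ) * er :=
    exp_le_aux (Real.rpow_pos_of_pos (ENNReal.toReal_pos hB0 hBt) _) main
  by_cases hrt : r = ⊤
  · have her0 : er = 0 := by rw [herdef, hrt]; simp
    rw [her0, mul_zero] at hba
    have hep0 : ep = 0 := le_antisymm (by linarith) hep
    have heq0 : eq' = 0 := le_antisymm (by linarith) heq'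
    have hpt : p = ⊤ := by
      rcases ENNReal.toReal_eq_zero_iff p |>.mp (by
        rw [hepdef] at hep0
        exact inv_eq_zero.mp (by rw [← one_div]; exact hep0)) with h | h
      · exact absurd h hp0
      · exact h
    have hqt : q = ⊤ := by
      rcases ENNReal.toReal_eq_zero_iff q |>.mp (by
        rw [heqdef] at heq0
        exact inv_eq_zero.mp (by rw [← one_div]; exact heq0)) with h | h
      · exact absurd h hq0
      · exact h
    rw [hpt, hqt]
    simp
  · have h1t : 1 / p ≠ ⊤ := by simp [ENNReal.div_eq_top, hp0]
    have h2t : 1 / q ≠ ⊤ := by simp [ENNReal.div_eq_top, hq0]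
    have hsum_t : 1 / p + 1 / q ≠ ⊤ := ENNReal.add_ne_top.mpr ⟨h1t, h2t⟩
    have hdr_t : (d : ℝ≥0∞) / r ≠ ⊤ := by
      simp [ENNReal.div_eq_top, hr0]
    rw [← ENNReal.toReal_le_toReal hsum_t hdr_t]
    have e3 : (1 / p + 1 / q).toReal = ep + eq' := by
      rw [ENNReal.toReal_add h1t h2t, ENNReal.toReal_div, ENNReal.toReal_div, ENNReal.toReal_one,
        hepdef, heqdef]
    have e4 : ((d : ℝ≥0∞) / r).toReal = (d:ℝ) * er := by
      rw [ENNReal.toReal_div, herdef, ← mul_one_div]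
      simp
    rw [e3, e4]
    exact hba
end
end

section
/- Necessary condition 3 for the triangle averaging operator: if T_1 : L^p × L^q → L^r is bounded, then d/p + 1/q ≤ d - 1 + 1/r. Key estimate: with f_δ = χ_{B(0,δ)} and g_δ = χ_{A_δ}, for all x with ||x|-1| ≤ δ/2 one has T_1(f_δ, g_δ)(x) ≥ c δ^{d-1}. -/
open MeasureTheory Metric Filter
open scoped ENNReal NNReal

noncomputable section

variable (d : ℕ)


section Helpers

open Matrix

variable {d : ℕ}

lemma euclid_norm_dot (x : EuclideanSpace ℝ (Fin d)) : ‖x‖ = Real.sqrt (x ⬝ᵥ x) := by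
  rw [EuclideanSpace.norm_eq]
  congr 1
  simp [dotProduct, Real.norm_eq_abs, sq_abs, sq]

lemma orth_rotAct_norm {A : Matrix (Fin d) (Fin d) ℝ}
    (hA : A ∈ Matrix.orthogonalGroup (Fin d) ℝ) (w : EuclideanSpace ℝ (Fin d)) :
    ‖rotAct d A w‖ = ‖w‖ := by
  rw [Matrix.mem_orthogonalGroup_iff'] at hA
  have hA' : A.transpose * A = 1 := by
    simpa [Matrix.star_eq_conjTranspose] using hA
  have key : (A.mulVec w) ⬝ᵥ (A.mulVec w) = w ⬝ᵥ w := by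
    rw [Matrix.dotProduct_mulVec, Matrix.vecMul_mulVec, hA', Matrix.vecMul_one]
  have hrot : (rotAct d A w).ofLp = A.mulVec w := rfl
  exact (euclid_norm_dot _).trans (by rw [hrot, key]; exact (euclid_norm_dot w).symm)

lemma exists_orth_mulVec {y z : EuclideanSpace ℝ (Fin d)} (h : ‖y‖ = ‖z‖) :
    ∃ A ∈ Matrix.orthogonalGroup (Fin d) ℝ, rotAct d A y = z := by
  -- get a linear isometry equiv sending y to z
  obtain ⟨f, hf⟩ : ∃ f : EuclideanSpace ℝ (Fin d) ≃ₗᵢ[ℝ] EuclideanSpace ℝ (Fin d), f y = z := by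
    by_cases hyz : y = z
    · exact ⟨LinearIsometryEquiv.refl ℝ _, by rw [hyz]; rfl⟩
    · exact ⟨Submodule.reflection (ℝ ∙ (y - z))ᗮ, Submodule.reflection_sub h⟩
  classical
  set e := EuclideanSpace.basisFun (Fin d) ℝ with he
  set B := e.toBasis with hB
  set A := LinearMap.toMatrix B B (f.toLinearEquiv : _ →ₗ[ℝ] _) with hA
  have repr_eq : ∀ x : EuclideanSpace ℝ (Fin d), (B.repr x : Fin d → ℝ) = x := by
    intro x; funext i
    rw [OrthonormalBasis.coe_toBasis_repr_apply, EuclideanSpace.basisFun_repr]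
  have hAx : ∀ x : EuclideanSpace ℝ (Fin d), A.mulVec x = f x := by
    intro x
    have := LinearMap.toMatrix_mulVec_repr B B (f.toLinearEquiv : _ →ₗ[ℝ] _) x
    rw [repr_eq, repr_eq] at this
    exact this
  refine ⟨A, ?_, by rw [show rotAct d A y = WithLp.toLp 2 (A.mulVec y) from rfl, hAx, hf]⟩
  rw [Matrix.mem_orthogonalGroup_iff']
  ext i j
  rw [Matrix.mul_apply, Matrix.one_apply]
  have : ∀ k, Aᵀ i k * A k j = (f (e i)) k * (f (e j)) k := by
    intro k
    rw [Matrix.transpose_apply]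
    congr 1
    · rw [hA, LinearMap.toMatrix_apply]
      have : B i = e i := OrthonormalBasis.coe_toBasis e ▸ rfl
      rw [this]
      exact (repr_eq (f (e i)) ▸ rfl)
    · rw [hA, LinearMap.toMatrix_apply]
      have : B j = e j := OrthonormalBasis.coe_toBasis e ▸ rfl
      rw [this]
      exact (repr_eq (f (e j)) ▸ rfl)
  rw [Finset.sum_congr rfl (fun k _ => this k)]
  have hinner : ∑ k, (f (e i)) k * (f (e j)) k = (inner ℝ (f (e i)) (f (e j)) : ℝ) := by
    rw [PiLp.inner_apply]
    simp [RCLike.inner_apply, mul_comm]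
  rw [hinner, f.inner_map_map]
  have := orthonormal_iff_ite.mp e.orthonormal i j
  rw [this]

instance : BorelSpace (Matrix (Fin d) (Fin d) ℝ) :=
  inferInstanceAs (BorelSpace (Fin d → Fin d → ℝ))

lemma continuous_rotAct (u : EuclideanSpace ℝ (Fin d)) :
    Continuous fun R : Matrix (Fin d) (Fin d) ℝ => rotAct d R u := by
  unfold rotAct
  refine (PiLp.continuous_toLp 2 _).comp ?_
  apply continuous_pi
  intro i
  simp only [Matrix.mulVec, dotProduct]
  exact continuous_finset_sum _ fun j _ => by
    fun_prop

lemma measurable_matMul (A : Matrix (Fin d) (Fin d) ℝ) :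
    Measurable fun B : Matrix (Fin d) (Fin d) ℝ => A * B := by
  refine measurable_pi_lambda _ fun i => measurable_pi_lambda _ fun j => ?_
  simp only [Matrix.mul_apply]
  exact Finset.measurable_sum _ fun k _ =>
    measurable_const.mul ((measurable_pi_apply j).comp (measurable_pi_apply k))

lemma measurableSet_ballset (u y : EuclideanSpace ℝ (Fin d)) (t : ℝ) :
    MeasurableSet {R : Matrix (Fin d) (Fin d) ℝ | ‖y - rotAct d R u‖ < t} := by
  have : IsOpen {R : Matrix (Fin d) (Fin d) ℝ | ‖y - rotAct d R u‖ < t} :=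
    isOpen_lt ((continuous_const.sub (continuous_rotAct u)).norm) continuous_const
  exact this.measurableSet

lemma rotAct_sub (A : Matrix (Fin d) (Fin d) ℝ) (a b : EuclideanSpace ℝ (Fin d)) :
    rotAct d A (a - b) = rotAct d A a - rotAct d A b := by
  have h2 : ∀ x : EuclideanSpace ℝ (Fin d), Matrix.toEuclideanLin A x = rotAct d A x :=
    fun x => Matrix.toEuclideanLin_apply A x
  rw [← h2, ← h2, ← h2, map_sub]

lemma rotAct_rotAct (A B : Matrix (Fin d) (Fin d) ℝ) (x : EuclideanSpace ℝ (Fin d)) :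
    rotAct d A (rotAct d B x) = rotAct d (A * B) x :=
  by unfold rotAct; rw [Matrix.mulVec_mulVec]

lemma measure_ball_rot (μ : Measure (Matrix (Fin d) (Fin d) ℝ))
    (hμinv : ∀ A ∈ Matrix.orthogonalGroup (Fin d) ℝ, μ.map (fun B => A * B) = μ)
    (u : EuclideanSpace ℝ (Fin d)) {y z : EuclideanSpace ℝ (Fin d)} (hyz : ‖y‖ = ‖z‖) (t : ℝ) :
    μ {R | ‖y - rotAct d R u‖ < t} = μ {R | ‖z - rotAct d R u‖ < t} := by
  obtain ⟨A, hA, hAy⟩ := exists_orth_mulVec hyz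
  have hstar : star A ∈ Matrix.orthogonalGroup (Fin d) ℝ := Unitary.star_mem hA
  have hAA : A * star A = 1 := hA.2
  have hiff : ∀ R, ‖z - rotAct d R u‖ = ‖y - rotAct d (star A * R) u‖ := by
    intro R
    have h1 : rotAct d A (y - rotAct d (star A * R) u) = z - rotAct d R u := by
      rw [rotAct_sub, rotAct_rotAct, ← Matrix.mul_assoc, hAA, Matrix.one_mul, hAy]
    rw [← h1, orth_rotAct_norm hA]
  have hpre : {R : Matrix (Fin d) (Fin d) ℝ | ‖z - rotAct d R u‖ < t} =
      (fun B => star A * B) ⁻¹' {R | ‖y - rotAct d R u‖ < t} := by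
    ext R
    simp only [Set.mem_setOf_eq, Set.mem_preimage, hiff R]
  rw [hpre, ← Measure.map_apply (measurable_matMul _) (measurableSet_ballset u y t),
    hμinv _ hstar]

lemma pow_one_add_le {s : ℝ} (h0 : 0 ≤ s) (h1 : s ≤ 1) (n : ℕ) :
    (1 + s) ^ n ≤ 1 + (2 ^ n - 1) * s := by
  induction n with
  | zero => simp
  | succ n IH =>
    have h2 : (1 : ℝ) ≤ 2 ^ n := one_le_pow₀ one_le_two
    have hs2 : (2 ^ n - 1) * s * s ≤ (2 ^ n - 1) * s :=
      mul_le_of_le_one_right (mul_nonneg (sub_nonneg.mpr h2) h0) h1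
    have hstep : (1 + s) ^ (n + 1) ≤ (1 + (2 ^ n - 1) * s) * (1 + s) := by
      rw [pow_succ]
      exact mul_le_mul_of_nonneg_right IH (by linarith)
    have hp : (2 : ℝ) ^ (n + 1) = 2 * 2 ^ n := by rw [pow_succ]; ring
    nlinarith [hstep]

lemma shell_diff_bound {s : ℝ} (h0 : 0 < s) (h1 : s ≤ 1) (n : ℕ) :
    (1 + s) ^ n - (1 - s) ^ n ≤ (2 ^ n + n) * s := by
  have hB : 1 + (n : ℝ) * (-s) ≤ (1 + -s) ^ n := one_add_mul_le_pow (by linarith) n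
  have hA := pow_one_add_le h0.le h1 n
  have : (1 - s) ^ n = (1 + -s) ^ n := by ring_nf
  nlinarith

lemma cap_lower (hd : 1 ≤ d) (μ : Measure (Matrix (Fin d) (Fin d) ℝ)) [IsProbabilityMeasure μ]
    (hμsupp : μ {A | A ∉ Matrix.orthogonalGroup (Fin d) ℝ} = 0)
    (hμinv : ∀ A ∈ Matrix.orthogonalGroup (Fin d) ℝ, μ.map (fun B => A * B) = μ)
    (u : EuclideanSpace ℝ (Fin d)) (hu : ‖u‖ = 1)
    {s : ℝ} (hs0 : 0 < s) (hs1 : s ≤ 1 / 2) {y : EuclideanSpace ℝ (Fin d)} (hy : ‖y‖ = 1) :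
    ENNReal.ofReal (s ^ (d - 1) / (2 ^ d + d)) ≤ μ {R | ‖y - rotAct d R u‖ < 2 * s} := by
  haveI : Nontrivial (EuclideanSpace ℝ (Fin d)) := by
    refine ⟨0, y, fun h => ?_⟩
    rw [← h, norm_zero] at hy; norm_num at hy
  have hg : Measurable fun R : Matrix (Fin d) (Fin d) ℝ => rotAct d R u :=
    (continuous_rotAct u).measurable
  set ν := μ.map (fun R => rotAct d R u) with hν
  haveI : IsProbabilityMeasure ν := Measure.isProbabilityMeasure_map hg.aemeasurable
  have hν_ball : ∀ (z : EuclideanSpace ℝ (Fin d)) (t : ℝ),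
      ν (ball z t) = μ {R | ‖z - rotAct d R u‖ < t} := by
    intro z t
    rw [hν, Measure.map_apply hg measurableSet_ball]
    congr 1
    ext R
    simp only [Set.mem_preimage, mem_ball, Set.mem_setOf_eq, dist_eq_norm, norm_sub_rev]
  -- Fubini
  set V := volume (ball (0 : EuclideanSpace ℝ (Fin d)) 1) with hV
  have hV0 : V ≠ 0 := (measure_ball_pos _ _ one_pos).ne'
  have hVtop : V ≠ ∞ := measure_ball_lt_top.ne
  set F : EuclideanSpace ℝ (Fin d) × EuclideanSpace ℝ (Fin d) → ℝ≥0∞ :=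
    Set.indicator {p | dist p.2 p.1 < s} 1 with hF
  have hU : MeasurableSet {p : EuclideanSpace ℝ (Fin d) × EuclideanSpace ℝ (Fin d) |
      dist p.2 p.1 < s} :=
    (isOpen_lt (continuous_snd.dist continuous_fst) continuous_const).measurableSet
  have hFmeas : Measurable F := measurable_one.indicator hU
  have hswap := lintegral_lintegral_swap (μ := volume) (ν := ν)
    (f := fun z w => F (z, w)) hFmeas.aemeasurable
  have h1 : ∀ z, ∫⁻ w, F (z, w) ∂ν = ν (ball z s) := by
    intro z
    have he : (fun w => F (z, w)) = (ball z s).indicator 1 := by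
      funext w
      by_cases h : dist w z < s <;> simp [hF, Set.indicator, h, mem_ball]
    rw [he, lintegral_indicator measurableSet_ball]
    simp
  have h2 : ∀ w, ∫⁻ z, F (z, w) ∂volume
      = volume (ball (0 : EuclideanSpace ℝ (Fin d)) s) := by
    intro w
    have he : (fun z => F (z, w)) = (ball w s).indicator 1 := by
      funext z
      by_cases h : dist w z < s <;>
        simp [hF, Set.indicator, h, mem_ball, dist_comm]
    rw [he, lintegral_indicator measurableSet_ball]
    simpa using Measure.addHaar_ball_center volume w s
  
  have htot : ∫⁻ z, ν (ball z s) ∂volume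
      = volume (ball (0 : EuclideanSpace ℝ (Fin d)) s) := by
    calc ∫⁻ z, ν (ball z s) ∂volume = ∫⁻ z, ∫⁻ w, F (z, w) ∂ν ∂volume := by
          exact lintegral_congr fun z => (h1 z).symm
    _ = ∫⁻ w, ∫⁻ z, F (z, w) ∂volume ∂ν := hswap
    _ = ∫⁻ _, volume (ball (0 : EuclideanSpace ℝ (Fin d)) s) ∂ν :=
          lintegral_congr fun w => h2 w
    _ = volume (ball (0 : EuclideanSpace ℝ (Fin d)) s) := by
          rw [lintegral_const, measure_univ, mul_one]
  have hsph_meas : MeasurableSet {w : EuclideanSpace ℝ (Fin d) | ‖w‖ = 1} :=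
    (isClosed_eq continuous_norm continuous_const).measurableSet
  have hνsph : ν {w : EuclideanSpace ℝ (Fin d) | ‖w‖ = 1}ᶜ = 0 := by
    rw [hν, Measure.map_apply hg hsph_meas.compl]
    refine measure_mono_null (fun R hR => ?_) hμsupp
    simp only [Set.mem_preimage, Set.mem_compl_iff, Set.mem_setOf_eq] at hR
    intro hRO
    exact hR (by rw [orth_rotAct_norm hRO, hu])
  set m := μ {R | ‖y - rotAct d R u‖ < 2 * s} with hm
  set Sh := {z : EuclideanSpace ℝ (Fin d) | 1 - s < ‖z‖ ∧ ‖z‖ < 1 + s} with hSh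
  have hShmeas : MeasurableSet Sh := by
    refine MeasurableSet.inter ?_ ?_
    · exact (isOpen_lt continuous_const continuous_norm).measurableSet
    · exact (isOpen_lt continuous_norm continuous_const).measurableSet
  have hbound : ∀ z, ν (ball z s) ≤ Sh.indicator (fun _ => m) z := by
    intro z
    by_cases hz : z ∈ Sh
    · rw [Set.indicator_of_mem hz]
      obtain ⟨ha, hb⟩ := hz
      have hznorm : (1 : ℝ) / 2 ≤ ‖z‖ := by linarith
      have hz0 : ‖z‖ ≠ 0 := by linarith
      set z' : EuclideanSpace ℝ (Fin d) := ‖z‖⁻¹ • z with hz'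
      have hz'norm : ‖z'‖ = 1 := by
        rw [hz', norm_smul, norm_inv, norm_norm, inv_mul_cancel₀ hz0]
      have hdist : dist z z' = |‖z‖ - 1| := by
        rw [dist_eq_norm, hz']
        have : z - ‖z‖⁻¹ • z = (1 - ‖z‖⁻¹) • z := by
          rw [sub_smul, one_smul]
        rw [this, norm_smul, Real.norm_eq_abs]
        rw [show |1 - ‖z‖⁻¹| * ‖z‖ = |(1 - ‖z‖⁻¹) * ‖z‖| by
          rw [abs_mul, abs_of_nonneg (norm_nonneg z)]]
        rw [sub_mul, one_mul, inv_mul_cancel₀ hz0, abs_sub_comm]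
      have hsub : ball z s ⊆ ball z' (2 * s) := by
        intro w hw
        rw [mem_ball] at hw ⊢
        have h3 : dist z z' < s := by
          rw [hdist, abs_lt]; constructor <;> linarith
        calc dist w z' ≤ dist w z + dist z z' := dist_triangle _ _ _
        _ < 2 * s := by linarith
      calc ν (ball z s) ≤ ν (ball z' (2 * s)) := measure_mono hsub
      _ = μ {R | ‖z' - rotAct d R u‖ < 2 * s} := hν_ball _ _
      _ = m := by
          rw [hm]
          exact measure_ball_rot μ hμinv u (by rw [hz'norm, hy]) _
    · rw [Set.indicator_of_notMem hz]
      have hcap : ball z s ∩ {w : EuclideanSpace ℝ (Fin d) | ‖w‖ = 1} = ∅ := by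
        ext w
        simp only [Set.mem_inter_iff, mem_ball, Set.mem_setOf_eq, Set.mem_empty_iff_false,
          iff_false, not_and]
        intro hw1 hw2
        apply hz
        have habs : |‖w‖ - ‖z‖| ≤ ‖w - z‖ := abs_norm_sub_norm_le w z
        rw [hw2] at habs
        rw [dist_eq_norm] at hw1
        rw [abs_le] at habs
        exact ⟨by linarith [habs.1, habs.2], by linarith [habs.1, habs.2]⟩
      have hco := measure_inter_conull (μ := ν) (s := ball z s) hνsph
      rw [← hco, hcap]
      simp
  have hle : volume (ball (0 : EuclideanSpace ℝ (Fin d)) s) ≤ m * volume Sh := by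
    calc volume (ball (0 : EuclideanSpace ℝ (Fin d)) s)
        = ∫⁻ z, ν (ball z s) ∂volume := htot.symm
    _ ≤ ∫⁻ z, Sh.indicator (fun _ => m) z ∂volume := lintegral_mono hbound
    _ = m * volume Sh := lintegral_indicator_const hShmeas m
  have hsd : volume (ball (0 : EuclideanSpace ℝ (Fin d)) s)
      = ENNReal.ofReal (s ^ d) * V := by
    rw [Measure.addHaar_ball volume 0 hs0.le, finrank_euclideanSpace_fin, hV]
  have hShvol : volume Sh ≤ ENNReal.ofReal ((2 ^ d + d) * s) * V := by
    have hsub : Sh ⊆ closedBall (0 : EuclideanSpace ℝ (Fin d)) (1 + s) \ closedBall (0 : EuclideanSpace ℝ (Fin d)) (1 - s) := by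
      intro z hz
      obtain ⟨ha, hb⟩ := hz
      constructor
      · rw [mem_closedBall, dist_zero_right]; linarith
      · rw [mem_closedBall, dist_zero_right]; push_neg; linarith
    calc volume Sh ≤ volume (closedBall (0 : EuclideanSpace ℝ (Fin d)) (1 + s) \ closedBall (0 : EuclideanSpace ℝ (Fin d)) (1 - s)) := measure_mono hsub
    _ = volume (closedBall (0 : EuclideanSpace ℝ (Fin d)) (1 + s))
        - volume (closedBall (0 : EuclideanSpace ℝ (Fin d)) (1 - s)) :=
        measure_diff (closedBall_subset_closedBall (by linarith))
          measurableSet_closedBall.nullMeasurableSet measure_closedBall_lt_top.ne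
    _ = ENNReal.ofReal ((1 + s) ^ d) * V - ENNReal.ofReal ((1 - s) ^ d) * V := by
        rw [Measure.addHaar_closedBall volume 0 (by linarith),
          Measure.addHaar_closedBall volume 0 (by linarith), finrank_euclideanSpace_fin, hV]
    _ ≤ ENNReal.ofReal ((1 + s) ^ d - (1 - s) ^ d) * V := by
        rw [tsub_le_iff_right, ← add_mul, ← ENNReal.ofReal_add
          (sub_nonneg.mpr (pow_le_pow_left₀ (by linarith) (by linarith) d))
          (pow_nonneg (by linarith) d)]
        have : (1 + s) ^ d - (1 - s) ^ d + (1 - s) ^ d = (1 + s) ^ d := by ring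
        rw [this]
    _ ≤ ENNReal.ofReal ((2 ^ d + d) * s) * V := by
        gcongr
        exact shell_diff_bound hs0 (by linarith) d
  have hcomb : ENNReal.ofReal (s ^ d) * V ≤ m * (ENNReal.ofReal ((2 ^ d + d) * s) * V) :=
    calc ENNReal.ofReal (s ^ d) * V = volume (ball (0 : EuclideanSpace ℝ (Fin d)) s) := hsd.symm
    _ ≤ m * volume Sh := hle
    _ ≤ m * (ENNReal.ofReal ((2 ^ d + d) * s) * V) := mul_le_mul_right hShvol m
  have h2d : (0 : ℝ) < 2 ^ d + d := by positivity
  have hkey : ENNReal.ofReal (s ^ (d - 1) / (2 ^ d + d)) * (ENNReal.ofReal ((2 ^ d + d) * s) * V)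
      = ENNReal.ofReal (s ^ d) * V := by
    rw [← mul_assoc, ← ENNReal.ofReal_mul (by positivity)]
    congr 2
    have hdd : d - 1 + 1 = d := Nat.succ_pred_eq_of_pos hd
    have hpow : s ^ (d - 1) * s = s ^ d := by rw [← pow_succ, hdd]
    field_simp
    linear_combination hpow
  have hBne0 : ENNReal.ofReal ((2 ^ d + d) * s) * V ≠ 0 := by
    apply mul_ne_zero _ hV0
    simp only [ne_eq, ENNReal.ofReal_eq_zero, not_le]
    positivity
  have hBnetop : ENNReal.ofReal ((2 ^ d + d) * s) * V ≠ ∞ :=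
    ENNReal.mul_ne_top ENNReal.ofReal_ne_top hVtop
  exact (ENNReal.mul_le_mul_iff_left hBne0 hBnetop).mp (hkey.le.trans hcomb)

lemma annulus_isClosed (δ : ℝ) : IsClosed (annulus d δ) := by
  have : annulus d δ = {y : EuclideanSpace ℝ (Fin d) | 1 - δ ≤ ‖y‖} ∩
      {y : EuclideanSpace ℝ (Fin d) | ‖y‖ ≤ 1 + δ} := rfl
  rw [this]
  exact (isClosed_le continuous_const continuous_norm).inter
    (isClosed_le continuous_norm continuous_const)

lemma triangle_lower (hd : 1 ≤ d) (μ : Measure (Matrix (Fin d) (Fin d) ℝ))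
    [IsProbabilityMeasure μ]
    (hμsupp : μ {A | A ∉ Matrix.orthogonalGroup (Fin d) ℝ} = 0)
    (hμinv : ∀ A ∈ Matrix.orthogonalGroup (Fin d) ℝ, μ.map (fun B => A * B) = μ)
    (u v : EuclideanSpace ℝ (Fin d)) (hu : ‖u‖ = 1) (huv : ‖u - v‖ = 1)
    {δ : ℝ} (hδ0 : 0 < δ) (hδ1 : δ ≤ 1) (x : EuclideanSpace ℝ (Fin d))
    (hx : |‖x‖ - 1| ≤ δ / 2) :
    ((1 / 4 : ℝ) ^ (d - 1) / (2 ^ d + d)) * δ ^ (d - 1) ≤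
      triangleAvg d μ u v ((ball (0 : EuclideanSpace ℝ (Fin d)) δ).indicator 1)
        ((annulus d δ).indicator 1) x := by
  classical
  set E : Set (Matrix (Fin d) (Fin d) ℝ) :=
    {R | x - rotAct d R u ∈ ball (0 : EuclideanSpace ℝ (Fin d)) δ} ∩
    {R | x - rotAct d R v ∈ annulus d δ} with hE
  have hEmeas : MeasurableSet E := by
    apply MeasurableSet.inter
    · have : {R : Matrix (Fin d) (Fin d) ℝ | x - rotAct d R u ∈ ball (0 : EuclideanSpace ℝ (Fin d)) δ}
          = {R | ‖x - rotAct d R u‖ < δ} := by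
        ext R; simp [mem_ball_zero_iff]
      rw [this]
      exact measurableSet_ballset u x δ
    · exact ((annulus_isClosed δ).preimage
        (continuous_const.sub (continuous_rotAct v))).measurableSet
  have hintegrand : (fun R =>
      ((ball (0 : EuclideanSpace ℝ (Fin d)) δ).indicator 1 : EuclideanSpace ℝ (Fin d) → ℝ)
        (x - rotAct d R u) *
      ((annulus d δ).indicator 1 : EuclideanSpace ℝ (Fin d) → ℝ) (x - rotAct d R v))
      = (E.indicator 1 : Matrix (Fin d) (Fin d) ℝ → ℝ) := by
    funext R
    by_cases h1 : x - rotAct d R u ∈ ball (0 : EuclideanSpace ℝ (Fin d)) δ <;>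
      by_cases h2 : x - rotAct d R v ∈ annulus d δ <;>
      simp_all [Set.indicator, hE, mem_ball_zero_iff]
  have hT : triangleAvg d μ u v ((ball (0 : EuclideanSpace ℝ (Fin d)) δ).indicator 1)
      ((annulus d δ).indicator 1) x = (μ E).toReal := by
    rw [triangleAvg, hintegrand, integral_indicator_one hEmeas]
    rfl
  -- S₀ ∩ O(d) ⊆ E
  set S₀ : Set (Matrix (Fin d) (Fin d) ℝ) := {R | ‖x - rotAct d R u‖ < δ} with hS₀
  have hsub : S₀ ∩ {A | A ∈ Matrix.orthogonalGroup (Fin d) ℝ} ⊆ E := by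
    rintro R ⟨hR1, hR2⟩
    have hR1' : ‖x - rotAct d R u‖ < δ := hR1
    constructor
    · exact mem_ball_zero_iff.mpr hR1'
    · have hRuv : rotAct d R u - rotAct d R v = rotAct d R (u - v) := (rotAct_sub R u v).symm
      have hnorm1 : ‖rotAct d R (u - v)‖ = 1 := by rw [orth_rotAct_norm hR2, huv]
      have heq : x - rotAct d R v = (x - rotAct d R u) + rotAct d R (u - v) := by
        rw [← hRuv]; abel
      constructor
      · have h4 : ‖rotAct d R (u - v)‖ - ‖x - rotAct d R u‖ ≤ ‖x - rotAct d R v‖ := by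
          rw [heq]
          have := norm_add_le (x - rotAct d R u) (rotAct d R (u - v))
          have h5 := norm_le_add_norm_add (rotAct d R (u - v)) (x - rotAct d R u)
          calc ‖rotAct d R (u - v)‖ - ‖x - rotAct d R u‖
              ≤ ‖x - rotAct d R u + rotAct d R (u - v)‖ := by
                have := norm_add_le (x - rotAct d R u + rotAct d R (u - v))
                  (-(x - rotAct d R u))
                simp only [add_neg_cancel_comm, norm_neg] at this
                linarith
          _ = ‖x - rotAct d R u + rotAct d R (u - v)‖ := rfl
        rw [hnorm1] at h4
        linarith
      · rw [heq]
        calc ‖x - rotAct d R u + rotAct d R (u - v)‖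
            ≤ ‖x - rotAct d R u‖ + ‖rotAct d R (u - v)‖ := norm_add_le _ _
        _ ≤ δ + 1 := by rw [hnorm1]; linarith
        _ = 1 + δ := by ring
  have hμS₀E : μ S₀ ≤ μ E := by
    have h0 : μ {A | A ∈ Matrix.orthogonalGroup (Fin d) ℝ}ᶜ = 0 := by
      have : {A | A ∈ Matrix.orthogonalGroup (Fin d) ℝ}ᶜ
          = {A | A ∉ Matrix.orthogonalGroup (Fin d) ℝ} := rfl
      rw [this]; exact hμsupp
    calc μ S₀ = μ (S₀ ∩ {A | A ∈ Matrix.orthogonalGroup (Fin d) ℝ}) :=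
        (measure_inter_conull h0).symm
    _ ≤ μ E := measure_mono hsub
  -- lower bound on μ S₀ via cap_lower
  have hxnorm : (1 : ℝ) / 2 ≤ ‖x‖ := by
    rw [abs_le] at hx
    linarith [hx.1]
  have hx0 : ‖x‖ ≠ 0 := by linarith
  set x' : EuclideanSpace ℝ (Fin d) := ‖x‖⁻¹ • x with hx'
  have hx'norm : ‖x'‖ = 1 := by
    rw [hx', norm_smul, norm_inv, norm_norm, inv_mul_cancel₀ hx0]
  have hdist : dist x x' = |‖x‖ - 1| := by
    rw [dist_eq_norm, hx']
    have : x - ‖x‖⁻¹ • x = (1 - ‖x‖⁻¹) • x := by rw [sub_smul, one_smul]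
    rw [this, norm_smul, Real.norm_eq_abs]
    rw [show |1 - ‖x‖⁻¹| * ‖x‖ = |(1 - ‖x‖⁻¹) * ‖x‖| by
      rw [abs_mul, abs_of_nonneg (norm_nonneg x)]]
    rw [sub_mul, one_mul, inv_mul_cancel₀ hx0, abs_sub_comm]
  have hcap := cap_lower hd μ hμsupp hμinv u hu (by positivity : 0 < δ / 4)
    (by linarith : δ / 4 ≤ 1 / 2) (y := x') hx'norm
  -- μ {R | ‖x' - Ru‖ < 2*(δ/4)} ≤ μ S₀
  have hsub2 : {R : Matrix (Fin d) (Fin d) ℝ | ‖x' - rotAct d R u‖ < 2 * (δ / 4)} ⊆ S₀ := by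
    intro R hR
    simp only [Set.mem_setOf_eq] at hR ⊢
    have h6 : ‖x - rotAct d R u‖ ≤ ‖x - x'‖ + ‖x' - rotAct d R u‖ := by
      have := norm_add_le (x - x') (x' - rotAct d R u)
      simpa [sub_add_sub_cancel] using this
    have h7 : ‖x - x'‖ ≤ δ / 2 := by
      rw [← dist_eq_norm, hdist]; exact hx
    show ‖x - rotAct d R u‖ < δ
    linarith
  have hfinal : ENNReal.ofReal ((δ / 4) ^ (d - 1) / (2 ^ d + d)) ≤ μ E :=
    le_trans hcap (le_trans (measure_mono hsub2) hμS₀E)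
  rw [hT]
  have hle2 : ((δ / 4) ^ (d - 1) / (2 ^ d + d)) ≤ (μ E).toReal := by
    have := ENNReal.toReal_mono (measure_ne_top μ E) hfinal
    rwa [ENNReal.toReal_ofReal (by positivity)] at this
  calc ((1 / 4 : ℝ) ^ (d - 1) / (2 ^ d + d)) * δ ^ (d - 1)
      = (δ / 4) ^ (d - 1) / (2 ^ d + d) := by
        rw [div_pow, div_pow]
        ring
  _ ≤ (μ E).toReal := hle2

lemma exponent_le {K₁ K₂ a b : ℝ} (hK₁ : 0 < K₁)
    (h : ∀ δ : ℝ, 0 < δ → δ ≤ 1 → K₁ * δ ^ b ≤ K₂ * δ ^ a) : a ≤ b := by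
  by_contra hab
  push_neg at hab
  have h1 := h 1 one_pos le_rfl
  rw [Real.one_rpow, Real.one_rpow, mul_one, mul_one] at h1
  have hK₂ : 0 < K₂ := lt_of_lt_of_le hK₁ h1
  set e := a - b with he
  have he0 : 0 < e := by simp only [he]; linarith
  set t := (K₁ / (2 * K₂)) ^ (1 / e) with ht
  have ht0 : 0 < t := Real.rpow_pos_of_pos (by positivity) _
  set δ := min 1 t with hδ
  have hδ0 : 0 < δ := lt_min one_pos ht0
  have hδ1 : δ ≤ 1 := min_le_left _ _
  have h2 := h δ hδ0 hδ1
  have hδb : 0 < δ ^ b := Real.rpow_pos_of_pos hδ0 _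
  have h3 : K₁ ≤ K₂ * δ ^ e := by
    have heq : K₂ * δ ^ a = K₂ * δ ^ e * δ ^ b := by
      rw [mul_assoc, ← Real.rpow_add hδ0]
      congr 2
      simp only [he]; ring
    rw [heq] at h2
    exact le_of_mul_le_mul_right (by linarith) hδb
  have h4 : δ ^ e ≤ t ^ e := Real.rpow_le_rpow hδ0.le (min_le_right _ _) he0.le
  have h5 : t ^ e = K₁ / (2 * K₂) := by
    rw [ht, ← Real.rpow_mul (by positivity), one_div_mul_cancel he0.ne', Real.rpow_one]
  rw [h5] at h4
  have h6 : K₂ * δ ^ e ≤ K₂ * (K₁ / (2 * K₂)) :=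
    mul_le_mul_of_nonneg_left h4 hK₂.le
  have h7 : K₂ * (K₁ / (2 * K₂)) = K₁ / 2 := by field_simp
  rw [h7] at h6
  linarith

lemma euclid_nontrivial (hd : 1 ≤ d) : Nontrivial (EuclideanSpace ℝ (Fin d)) := by
  refine ⟨EuclideanSpace.single ⟨0, hd⟩ 1, 0, fun h => ?_⟩
  have := congrFun (congrArg WithLp.ofLp h) ⟨0, hd⟩
  simp [EuclideanSpace.single_apply] at this

lemma vol_annulus_le (hd : 1 ≤ d) {t : ℝ} (ht0 : 0 < t) (ht1 : t ≤ 1) :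
    volume (annulus d t) ≤ ENNReal.ofReal ((2 ^ d + d) * t) *
      volume (ball (0 : EuclideanSpace ℝ (Fin d)) 1) := by
  haveI := euclid_nontrivial hd
  set V := volume (ball (0 : EuclideanSpace ℝ (Fin d)) 1) with hV
  have hVtop : V ≠ ∞ := measure_ball_lt_top.ne
  have hsub : annulus d t ⊆ closedBall (0 : EuclideanSpace ℝ (Fin d)) (1 + t) \
      ball (0 : EuclideanSpace ℝ (Fin d)) (1 - t) := by
    rintro z ⟨ha, hb⟩
    constructor
    · rw [mem_closedBall, dist_zero_right]; exact hb
    · rw [mem_ball, dist_zero_right]; push_neg; exact ha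
  calc volume (annulus d t)
      ≤ volume (closedBall (0 : EuclideanSpace ℝ (Fin d)) (1 + t) \
        ball (0 : EuclideanSpace ℝ (Fin d)) (1 - t)) := measure_mono hsub
  _ = volume (closedBall (0 : EuclideanSpace ℝ (Fin d)) (1 + t))
      - volume (ball (0 : EuclideanSpace ℝ (Fin d)) (1 - t)) :=
      measure_diff (ball_subset_closedBall.trans
          (closedBall_subset_closedBall (by linarith)))
        measurableSet_ball.nullMeasurableSet measure_ball_lt_top.ne
  _ = ENNReal.ofReal ((1 + t) ^ d) * V - ENNReal.ofReal ((1 - t) ^ d) * V := by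
      rw [Measure.addHaar_ball volume 0 (by linarith : (0:ℝ) ≤ 1 - t),
        Measure.addHaar_closedBall volume 0 (by linarith), finrank_euclideanSpace_fin, hV]
  _ ≤ ENNReal.ofReal ((1 + t) ^ d - (1 - t) ^ d) * V := by
      rw [tsub_le_iff_right, ← add_mul, ← ENNReal.ofReal_add
        (sub_nonneg.mpr (pow_le_pow_left₀ (by linarith) (by linarith) d))
        (pow_nonneg (by linarith) d)]
      have : (1 + t) ^ d - (1 - t) ^ d + (1 - t) ^ d = (1 + t) ^ d := by ring
      rw [this]
  _ ≤ ENNReal.ofReal ((2 ^ d + d) * t) * V := by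
      gcongr
      exact shell_diff_bound ht0 ht1 d

lemma vol_shell_lower (hd : 1 ≤ d) {t : ℝ} (ht0 : 0 < t) (ht1 : t ≤ 1) :
    ENNReal.ofReal t * volume (ball (0 : EuclideanSpace ℝ (Fin d)) 1) ≤
      volume {x : EuclideanSpace ℝ (Fin d) | |‖x‖ - 1| ≤ t} := by
  haveI := euclid_nontrivial hd
  set V := volume (ball (0 : EuclideanSpace ℝ (Fin d)) 1) with hV
  have hVtop : V ≠ ∞ := measure_ball_lt_top.ne
  have hsub : closedBall (0 : EuclideanSpace ℝ (Fin d)) (1 + t) \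
      ball (0 : EuclideanSpace ℝ (Fin d)) 1 ⊆ {x : EuclideanSpace ℝ (Fin d) | |‖x‖ - 1| ≤ t} := by
    rintro z ⟨ha, hb⟩
    rw [mem_closedBall, dist_zero_right] at ha
    rw [mem_ball, dist_zero_right] at hb
    push_neg at hb
    simp only [Set.mem_setOf_eq, abs_le]
    constructor <;> linarith
  have hdiff : volume (closedBall (0 : EuclideanSpace ℝ (Fin d)) (1 + t) \
      ball (0 : EuclideanSpace ℝ (Fin d)) 1)
      = volume (closedBall (0 : EuclideanSpace ℝ (Fin d)) (1 + t))
        - volume (ball (0 : EuclideanSpace ℝ (Fin d)) 1) :=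
    measure_diff (ball_subset_closedBall.trans
        (closedBall_subset_closedBall (by linarith)))
      measurableSet_ball.nullMeasurableSet measure_ball_lt_top.ne
  have hcb : volume (closedBall (0 : EuclideanSpace ℝ (Fin d)) (1 + t))
      = ENNReal.ofReal ((1 + t) ^ d) * V := by
    rw [Measure.addHaar_closedBall volume 0 (by linarith), finrank_euclideanSpace_fin, hV]
  have hpow : 1 + t ≤ (1 + t) ^ d := by
    calc 1 + t = (1 + t) ^ 1 := (pow_one _).symm
    _ ≤ (1 + t) ^ d := pow_le_pow_right₀ (by linarith) hd
  calc ENNReal.ofReal t * V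
      = (ENNReal.ofReal (1 + t)) * V - V := by
        rw [ENNReal.ofReal_add (by norm_num) ht0.le, ENNReal.ofReal_one, add_mul, one_mul,
          ENNReal.add_sub_cancel_left hVtop]
  _ ≤ ENNReal.ofReal ((1 + t) ^ d) * V - V := by
        gcongr
  _ = volume (closedBall (0 : EuclideanSpace ℝ (Fin d)) (1 + t))
      - volume (ball (0 : EuclideanSpace ℝ (Fin d)) 1) := by rw [hcb, hV]
  _ = volume (closedBall (0 : EuclideanSpace ℝ (Fin d)) (1 + t) \
      ball (0 : EuclideanSpace ℝ (Fin d)) 1) := hdiff.symm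
  _ ≤ volume {x : EuclideanSpace ℝ (Fin d) | |‖x‖ - 1| ≤ t} := measure_mono hsub

end Helpers

/-- **Necessary condition 3 for the triangle averaging operator**: if
`T₁ : L^p × L^q → L^r` is bounded then `d/p + 1/q ≤ d - 1 + 1/r`.  The key estimate:
with `f_δ = χ_{B(0,δ)}` and `g_δ = χ_{A_δ}`, for all `x` with `||x| - 1| ≤ δ/2` one has
`T₁(f_δ, g_δ)(x) ≥ c δ^{d-1}`. -/
theorem triangle_necessary_condition_three (hd : 2 ≤ d)
    (μ : Measure (Matrix (Fin d) (Fin d) ℝ)) [IsProbabilityMeasure μ]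
    (hμsupp : μ {A | A ∉ Matrix.orthogonalGroup (Fin d) ℝ} = 0)
    (hμinv : ∀ A ∈ Matrix.orthogonalGroup (Fin d) ℝ, μ.map (fun B => A * B) = μ)
    (u v : EuclideanSpace ℝ (Fin d)) (hu : ‖u‖ = 1) (hv : ‖v‖ = 1) (huv : ‖u - v‖ = 1)
    (p q r : ℝ≥0∞) (hp : 1 ≤ p) (hq : 1 ≤ q) (hr : 0 < r)
    (C : ℝ≥0)
    (hbound : ∀ f g : EuclideanSpace ℝ (Fin d) → ℝ, Measurable f → Measurable g →
      eLpNorm (triangleAvg d μ u v f g) r volume ≤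
        C * eLpNorm f p volume * eLpNorm g q volume) :
    (d : ℝ≥0∞) / p + 1 / q ≤ (d : ℝ≥0∞) - 1 + 1 / r ∧
      ∃ c > (0 : ℝ), ∀ δ : ℝ, 0 < δ → δ ≤ 1 → ∀ x : EuclideanSpace ℝ (Fin d),
        |‖x‖ - 1| ≤ δ / 2 →
          c * δ ^ (d - 1) ≤
            triangleAvg d μ u v ((ball (0 : EuclideanSpace ℝ (Fin d)) δ).indicator 1)
              ((annulus d δ).indicator 1) x := by
  have hd1 : 1 ≤ d := le_trans one_le_two hd
  haveI : Nontrivial (EuclideanSpace ℝ (Fin d)) := euclid_nontrivial hd1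
  have hcpos : (0:ℝ) < (1 / 4 : ℝ) ^ (d - 1) / (2 ^ d + d) := by positivity
  refine ⟨?_, (1 / 4 : ℝ) ^ (d - 1) / (2 ^ d + d), hcpos,
    fun δ h0 h1 x hx => triangle_lower hd1 μ hμsupp hμinv u v hu huv h0 h1 x hx⟩
  set c : ℝ := (1 / 4 : ℝ) ^ (d - 1) / (2 ^ d + d) with hc
  set V := volume (ball (0 : EuclideanSpace ℝ (Fin d)) 1) with hV
  have hV0 : V ≠ 0 := (measure_ball_pos _ _ one_pos).ne'
  have hVtop : V ≠ ∞ := measure_ball_lt_top.ne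
  set Vr := V.toReal with hVr
  have hVrpos : 0 < Vr := ENNReal.toReal_pos hV0 hVtop
  have hVV : V = ENNReal.ofReal Vr := (ENNReal.ofReal_toReal hVtop).symm
  have hp0 : p ≠ 0 := (lt_of_lt_of_le zero_lt_one hp).ne'
  have hq0 : q ≠ 0 := (lt_of_lt_of_le zero_lt_one hq).ne'
  have hr0 : r ≠ 0 := hr.ne'
  set ap := 1 / p.toReal with hap
  set aq := 1 / q.toReal with haq
  set ar := 1 / r.toReal with har
  have hap0 : 0 ≤ ap := by rw [hap]; positivity
  have haq0 : 0 ≤ aq := by rw [haq]; positivity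
  have har0 : 0 ≤ ar := by rw [har]; positivity
  have key : ∀ δ : ℝ, 0 < δ → δ ≤ 1 →
      (c * (Vr / 2) ^ ar) * δ ^ (((d - 1 : ℕ) : ℝ) + ar) ≤
      ((C : ℝ) * Vr ^ ap * ((2 ^ d + d) * Vr) ^ aq) * δ ^ ((d : ℝ) * ap + aq) := by
    intro δ hδ0 hδ1
    set f : EuclideanSpace ℝ (Fin d) → ℝ :=
      (ball (0 : EuclideanSpace ℝ (Fin d)) δ).indicator 1 with hf
    set g : EuclideanSpace ℝ (Fin d) → ℝ := (annulus d δ).indicator 1 with hg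
    have hfm : Measurable f := measurable_one.indicator measurableSet_ball
    have hgm : Measurable g := measurable_one.indicator (annulus_isClosed δ).measurableSet
    have hb := hbound f g hfm hgm
    set Sh := {x : EuclideanSpace ℝ (Fin d) | |‖x‖ - 1| ≤ δ / 2} with hSh
    have hShmeas : MeasurableSet Sh :=
      (isClosed_le ((continuous_norm.sub continuous_const).abs) continuous_const).measurableSet
    have hShlow : ENNReal.ofReal (δ / 2) * V ≤ volume Sh :=
      vol_shell_lower hd1 (by linarith) (by linarith)
    have hSh0 : volume Sh ≠ 0 := by
      intro h
      have h1 : (0:ℝ≥0∞) < ENNReal.ofReal (δ / 2) * V := by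
        apply ENNReal.mul_pos _ hV0
        simp only [ne_eq, ENNReal.ofReal_eq_zero, not_le]
        linarith
      exact absurd (le_antisymm (h ▸ hShlow) zero_le) h1.ne'
    have hTlow : ENNReal.ofReal (c * δ ^ (d - 1)) * volume Sh ^ (1 / r.toReal) ≤
        eLpNorm (triangleAvg d μ u v f g) r volume := by
      have hmono : ∀ x, ‖Sh.indicator (fun _ => c * δ ^ (d - 1)) x‖ ≤
          ‖triangleAvg d μ u v f g x‖ := by
        intro x
        by_cases hxSh : x ∈ Sh
        · rw [Set.indicator_of_mem hxSh]
          have hTx := triangle_lower hd1 μ hμsupp hμinv u v hu huv hδ0 hδ1 x hxSh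
          rw [Real.norm_eq_abs, Real.norm_eq_abs, abs_of_nonneg (by positivity)]
          exact le_trans hTx (le_abs_self _)
        · rw [Set.indicator_of_notMem hxSh]
          simp
      have hmm : eLpNorm (Sh.indicator fun _ => c * δ ^ (d - 1)) r volume ≤
          eLpNorm (triangleAvg d μ u v f g) r volume := eLpNorm_mono hmono
      rwa [eLpNorm_indicator_const' hShmeas hSh0 hr0,
        Real.enorm_eq_ofReal (by positivity)] at hmm
    have hballvol : volume (ball (0 : EuclideanSpace ℝ (Fin d)) δ)
        = ENNReal.ofReal (δ ^ d) * V := by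
      rw [Measure.addHaar_ball volume 0 hδ0.le, finrank_euclideanSpace_fin, hV]
    have hball0 : volume (ball (0 : EuclideanSpace ℝ (Fin d)) δ) ≠ 0 :=
      (measure_ball_pos _ _ hδ0).ne'
    have hfval : eLpNorm f p volume = (ENNReal.ofReal (δ ^ d) * V) ^ ap := by
      rw [hf, show ((ball (0 : EuclideanSpace ℝ (Fin d)) δ).indicator 1 :
            EuclideanSpace ℝ (Fin d) → ℝ)
          = (ball (0 : EuclideanSpace ℝ (Fin d)) δ).indicator (fun _ => (1:ℝ)) from rfl,
        eLpNorm_indicator_const' measurableSet_ball hball0 hp0, hballvol]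
      simp only [enorm_one, one_mul]
      rfl
    have hann0 : volume (annulus d δ) ≠ 0 := by
      have hsub : Sh ⊆ annulus d δ := by
        intro z hz
        rw [hSh, Set.mem_setOf_eq, abs_le] at hz
        exact ⟨by linarith [hz.1], by linarith [hz.2]⟩
      exact fun h => hSh0 (le_antisymm (h ▸ measure_mono hsub) zero_le)
    have hgval : eLpNorm g q volume ≤ (ENNReal.ofReal ((2 ^ d + d) * δ) * V) ^ aq := by
      rw [hg, show ((annulus d δ).indicator 1 : EuclideanSpace ℝ (Fin d) → ℝ)
          = (annulus d δ).indicator (fun _ => (1:ℝ)) from rfl,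
        eLpNorm_indicator_const' (annulus_isClosed δ).measurableSet hann0 hq0]
      simp only [enorm_one, one_mul]
      exact ENNReal.rpow_le_rpow (le_trans (vol_annulus_le hd1 hδ0 hδ1) (by rw [hV])) haq0
    have hchain : ENNReal.ofReal (c * δ ^ (d - 1)) * (ENNReal.ofReal (δ / 2) * V) ^ ar ≤
        (C : ℝ≥0∞) * (ENNReal.ofReal (δ ^ d) * V) ^ ap *
          (ENNReal.ofReal ((2 ^ d + d) * δ) * V) ^ aq := by
      calc ENNReal.ofReal (c * δ ^ (d - 1)) * (ENNReal.ofReal (δ / 2) * V) ^ ar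
          ≤ ENNReal.ofReal (c * δ ^ (d - 1)) * volume Sh ^ ar :=
            mul_le_mul_right (ENNReal.rpow_le_rpow hShlow har0) _
      _ ≤ eLpNorm (triangleAvg d μ u v f g) r volume := hTlow
      _ ≤ C * eLpNorm f p volume * eLpNorm g q volume := hb
      _ ≤ _ := by rw [hfval]; exact mul_le_mul_right hgval _
    have e1 : (ENNReal.ofReal (δ / 2) * V) ^ ar = ENNReal.ofReal ((δ / 2 * Vr) ^ ar) := by
      rw [hVV, ← ENNReal.ofReal_mul (by positivity), ENNReal.ofReal_rpow_of_pos (by positivity)]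
    have e2 : (ENNReal.ofReal (δ ^ d) * V) ^ ap = ENNReal.ofReal ((δ ^ d * Vr) ^ ap) := by
      rw [hVV, ← ENNReal.ofReal_mul (by positivity), ENNReal.ofReal_rpow_of_pos (by positivity)]
    have e3 : (ENNReal.ofReal ((2 ^ d + d) * δ) * V) ^ aq
        = ENNReal.ofReal (((2 ^ d + d) * δ * Vr) ^ aq) := by
      rw [hVV, ← ENNReal.ofReal_mul (by positivity), ENNReal.ofReal_rpow_of_pos (by positivity)]
    rw [e1, e2, e3, ← ENNReal.ofReal_mul (by positivity),
      show (C : ℝ≥0∞) = ENNReal.ofReal (C : ℝ) from ENNReal.ofReal_coe_nnreal.symm,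
      ← ENNReal.ofReal_mul (by positivity), ← ENNReal.ofReal_mul (by positivity)] at hchain
    have hreal := (ENNReal.ofReal_le_ofReal_iff (by positivity)).mp hchain
    have hL : c * δ ^ (d - 1) * (δ / 2 * Vr) ^ ar
        = (c * (Vr / 2) ^ ar) * δ ^ (((d - 1 : ℕ) : ℝ) + ar) := by
      rw [Real.rpow_add hδ0, Real.rpow_natCast,
        show δ / 2 * Vr = δ * (Vr / 2) by ring,
        Real.mul_rpow hδ0.le (by positivity)]
      ring
    have hR : (C : ℝ) * (δ ^ d * Vr) ^ ap * ((2 ^ d + d) * δ * Vr) ^ aq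
        = ((C : ℝ) * Vr ^ ap * ((2 ^ d + d) * Vr) ^ aq) * δ ^ ((d : ℝ) * ap + aq) := by
      rw [Real.rpow_add hδ0, Real.mul_rpow (pow_nonneg hδ0.le d) hVrpos.le,
        show (2 ^ d + (d:ℝ)) * δ * Vr = δ * ((2 ^ d + d) * Vr) by ring,
        Real.mul_rpow hδ0.le (by positivity),
        ← Real.rpow_natCast δ d, ← Real.rpow_mul hδ0.le]
      ring
    rw [← hL, ← hR]
    exact hreal
  have hK1 : (0:ℝ) < c * (Vr / 2) ^ ar := by positivity
  have hexp : (d : ℝ) * ap + aq ≤ ((d - 1 : ℕ) : ℝ) + ar := exponent_le hK1 key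
  have hcast : ((d - 1 : ℕ) : ℝ) = (d : ℝ) - 1 := by
    rw [Nat.cast_sub hd1, Nat.cast_one]
  have hd1' : (1:ℝ) ≤ (d:ℝ) := by exact_mod_cast hd1
  have hinv : ∀ e : ℝ≥0∞, e ≠ 0 → 1 / e = ENNReal.ofReal (1 / e.toReal) := by
    intro e he0
    by_cases htop : e = ∞
    · simp [htop]
    · rw [one_div, one_div, ← ENNReal.toReal_inv,
        ENNReal.ofReal_toReal (ENNReal.inv_ne_top.mpr he0)]
  have hdp : (d : ℝ≥0∞) / p = ENNReal.ofReal ((d : ℝ) * ap) := by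
    rw [div_eq_mul_inv, ← one_div, hinv p hp0,
      show (d : ℝ≥0∞) = ENNReal.ofReal (d : ℝ) from (ENNReal.ofReal_natCast d).symm,
      ← ENNReal.ofReal_mul (by positivity)]
  have hq1 : (1 : ℝ≥0∞) / q = ENNReal.ofReal aq := hinv q hq0
  have hr1 : (1 : ℝ≥0∞) / r = ENNReal.ofReal ar := hinv r hr0
  have hdm1 : (d : ℝ≥0∞) - 1 = ENNReal.ofReal ((d : ℝ) - 1) := by
    apply ENNReal.sub_eq_of_eq_add ENNReal.one_ne_top
    rw [← ENNReal.ofReal_one, ← ENNReal.ofReal_add (by linarith) (by norm_num),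
      sub_add_cancel, ENNReal.ofReal_natCast]
  rw [hdp, hq1, hr1, hdm1, ← ENNReal.ofReal_add (by positivity) haq0,
    ← ENNReal.ofReal_add (by linarith) har0]
  apply ENNReal.ofReal_le_ofReal
  rw [hcast] at hexp
  linarith
end
end

section
/- Support volume bound for angularly localized multipliers: for i, j, k ≥ 1, the set {(ξ,η) ∈ R^d × R^d : |ξ| ≤ 2^{i+1}, |η| ≤ 2^{j+1}, |sin θ(ξ,η)| ≤ 2^{-k+1}} has Lebesgue measure at most C 2^{(i+j)d} 2^{-k(d-1)}, where θ(ξ,η) is the angle between ξ and η. -/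
open MeasureTheory Metric Filter
open scoped ENNReal NNReal RealInnerProductSpace

noncomputable section

lemma coord_abs_le_norm {n : ℕ} (x : EuclideanSpace ℝ (Fin n)) (i : Fin n) : |x i| ≤ ‖x‖ := by
  rw [EuclideanSpace.norm_eq]
  rw [← Real.sqrt_sq_eq_abs]
  apply Real.sqrt_le_sqrt
  simpa using Finset.single_le_sum (f := fun j => (x j) ^ 2) (fun j _ => sq_nonneg _)
    (Finset.mem_univ i)

lemma euclidean_box_volume {n : ℕ} (c : Fin n → ℝ) :
    volume {x : EuclideanSpace ℝ (Fin n) | ∀ i, |x i| ≤ c i}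
      = ∏ i, ENNReal.ofReal (2 * c i) := by
  have hpre : {x : EuclideanSpace ℝ (Fin n) | ∀ i, |x i| ≤ c i}
      = (MeasurableEquiv.toLp 2 (Fin n → ℝ)).symm ⁻¹'
        (Set.pi Set.univ (fun i => Set.Icc (-(c i)) (c i))) := by
    ext x
    simp only [Set.mem_setOf_eq, Set.mem_preimage, Set.mem_pi, Set.mem_univ, Set.mem_Icc,
      forall_true_left, abs_le, MeasurableEquiv.coe_toLp, MeasurableEquiv.coe_mk]
    rfl
  rw [hpre, (EuclideanSpace.volume_preserving_symm_measurableEquiv_toLp (Fin n)).measure_preimage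
    (MeasurableSet.univ_pi (fun i => measurableSet_Icc)).nullMeasurableSet,
    volume_pi_pi]
  congr 1
  ext i
  rw [Real.volume_Icc]
  ring_nf

lemma tube_volume_bound {m : ℕ} (u : EuclideanSpace ℝ (Fin (m + 1))) (hu : ‖u‖ = 1)
    (R r : ℝ) :
    volume {η : EuclideanSpace ℝ (Fin (m + 1)) | |⟪u, η⟫| ≤ R ∧ ‖η - ⟪u, η⟫ • u‖ ≤ r}
      ≤ ENNReal.ofReal (2 * R) * ENNReal.ofReal (2 * r) ^ m := by
  set e : EuclideanSpace ℝ (Fin (m + 1)) := EuclideanSpace.single 0 1 with he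
  have hne : ‖e‖ = 1 := by simp [he, EuclideanSpace.norm_single]
  set f : EuclideanSpace ℝ (Fin (m + 1)) ≃ₗᵢ[ℝ] EuclideanSpace ℝ (Fin (m + 1)) :=
    Submodule.reflection (ℝ ∙ (u - e))ᗮ with hf
  have hfu : f u = e := Submodule.reflection_sub (by rw [hu, hne])
  -- T(u) = f ⁻¹' T(e)
  have hTe_meas : MeasurableSet {η : EuclideanSpace ℝ (Fin (m + 1)) |
      |⟪e, η⟫| ≤ R ∧ ‖η - ⟪e, η⟫ • e‖ ≤ r} := by
    have hc0 : Continuous fun η : EuclideanSpace ℝ (Fin (m + 1)) => (⟪e, η⟫ : ℝ) :=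
      Continuous.inner continuous_const continuous_id
    have hc1 : Continuous fun η : EuclideanSpace ℝ (Fin (m + 1)) => |⟪e, η⟫| := hc0.abs
    have hc2 : Continuous fun η : EuclideanSpace ℝ (Fin (m + 1)) => ‖η - ⟪e, η⟫ • e‖ :=
      (continuous_id.sub (hc0.smul continuous_const)).norm
    rw [Set.setOf_and]
    exact ((isClosed_le hc1 continuous_const).inter
      (isClosed_le hc2 continuous_const)).measurableSet
  have hset : {η : EuclideanSpace ℝ (Fin (m + 1)) | |⟪u, η⟫| ≤ R ∧ ‖η - ⟪u, η⟫ • u‖ ≤ r}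
      = f ⁻¹' {η : EuclideanSpace ℝ (Fin (m + 1)) | |⟪e, η⟫| ≤ R ∧ ‖η - ⟪e, η⟫ • e‖ ≤ r} := by
    ext η
    have h1 : ⟪e, f η⟫ = ⟪u, η⟫ := by rw [← hfu, LinearIsometryEquiv.inner_map_map]
    have h2 : ‖f η - ⟪e, f η⟫ • e‖ = ‖η - ⟪u, η⟫ • u‖ := by
      rw [h1, ← hfu, ← LinearIsometryEquiv.map_smul, ← LinearIsometryEquiv.map_sub,
        LinearIsometryEquiv.norm_map]
    simp only [Set.mem_setOf_eq, Set.mem_preimage]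
    rw [h2, h1]
  rw [hset, f.measurePreserving.measure_preimage hTe_meas.nullMeasurableSet]
  -- include T(e) in a box
  have hsub : {η : EuclideanSpace ℝ (Fin (m + 1)) | |⟪e, η⟫| ≤ R ∧ ‖η - ⟪e, η⟫ • e‖ ≤ r}
      ⊆ {x : EuclideanSpace ℝ (Fin (m + 1)) | ∀ i, |x i| ≤ if i = 0 then R else r} := by
    rintro η ⟨h1, h2⟩ i
    have hinner : ⟪e, η⟫ = η 0 := by
      rw [he, EuclideanSpace.inner_single_left]; simp
    by_cases hi : i = 0
    · subst hi; simpa [hinner] using h1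
    · simp only [hi, if_false]
      have hcoord : (η - ⟪e, η⟫ • e) i = η i := by
        simp [he, EuclideanSpace.single_apply, hi, PiLp.sub_apply, PiLp.smul_apply]
      calc |η i| = |(η - ⟪e, η⟫ • e) i| := by rw [hcoord]
        _ ≤ ‖η - ⟪e, η⟫ • e‖ := coord_abs_le_norm _ _
        _ ≤ r := h2
  calc volume {η : EuclideanSpace ℝ (Fin (m + 1)) | |⟪e, η⟫| ≤ R ∧ ‖η - ⟪e, η⟫ • e‖ ≤ r}
      ≤ volume {x : EuclideanSpace ℝ (Fin (m + 1)) | ∀ i, |x i| ≤ if i = 0 then R else r} :=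
        measure_mono hsub
    _ = ∏ i : Fin (m + 1), ENNReal.ofReal (2 * if i = 0 then R else r) :=
        euclidean_box_volume _
    _ = ENNReal.ofReal (2 * R) * ENNReal.ofReal (2 * r) ^ m := by
        rw [Fin.prod_univ_succ]
        simp [Fin.succ_ne_zero]

lemma ofReal_two_rpow (y : ℝ) : ENNReal.ofReal ((2:ℝ) ^ y) = (2:ℝ≥0∞) ^ y := by
  rw [← ENNReal.ofReal_rpow_of_pos two_pos, ENNReal.ofReal_ofNat]

/-- **Support volume bound for angularly localized multipliers**: for `i, j, k ≥ 1`, the set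
`{(ξ,η) ∈ ℝ^d × ℝ^d : |ξ| ≤ 2^{i+1}, |η| ≤ 2^{j+1}, |sin θ(ξ,η)| ≤ 2^{-k+1}}` has Lebesgue
measure at most `C 2^{(i+j)d} 2^{-k(d-1)}`, where `θ(ξ,η)` is the angle between `ξ` and `η`
(so that `|sin θ| = √(1 - (ξ·η / (|ξ||η|))²)`). -/
theorem angular_localization_support_volume_bound (d : ℕ) (hd : 2 ≤ d) :
    ∃ C : ℝ≥0, ∀ i j k : ℕ, 1 ≤ i → 1 ≤ j → 1 ≤ k →
      volume {p : EuclideanSpace ℝ (Fin d) × EuclideanSpace ℝ (Fin d) |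
          ‖p.1‖ ≤ 2 ^ (i + 1) ∧ ‖p.2‖ ≤ 2 ^ (j + 1) ∧
            Real.sqrt (1 - (⟪p.1, p.2⟫ / (‖p.1‖ * ‖p.2‖)) ^ 2) ≤ (2 : ℝ) ^ (-(k : ℝ) + 1)} ≤
        (C : ℝ≥0∞) * 2 ^ ((i + j) * d) * (2 : ℝ≥0∞) ^ (-((k : ℤ) * ((d : ℤ) - 1))) := by
  obtain ⟨m, rfl⟩ : ∃ m, d = m + 1 := ⟨d - 1, by omega⟩
  have hm : 1 ≤ m := by omega
  refine ⟨2 ^ (6 * (m + 1)), fun i j k hi hj hk => ?_⟩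
  set E := EuclideanSpace ℝ (Fin (m + 1)) with hE
  set Ri : ℝ := 2 ^ (i + 1) with hRi
  set Rj : ℝ := 2 ^ (j + 1) with hRj
  set δ : ℝ := (2 : ℝ) ^ (-(k : ℝ) + 1) with hδ
  have hδpos : 0 < δ := Real.rpow_pos_of_pos two_pos _
  have hRjpos : (0:ℝ) < Rj := by positivity
  have hRipos : (0:ℝ) < Ri := by positivity
  set S := {p : E × E | ‖p.1‖ ≤ Ri ∧ ‖p.2‖ ≤ Rj ∧
      Real.sqrt (1 - (⟪p.1, p.2⟫ / (‖p.1‖ * ‖p.2‖)) ^ 2) ≤ δ} with hSdef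
  have hS : MeasurableSet S := by
    have hg : Measurable fun p : E × E =>
        Real.sqrt (1 - (⟪p.1, p.2⟫ / (‖p.1‖ * ‖p.2‖)) ^ 2) := by
      have h1 : Measurable fun p : E × E => (⟪p.1, p.2⟫ : ℝ) :=
        (Continuous.inner continuous_fst continuous_snd).measurable
      have h2 : Measurable fun p : E × E => ‖p.1‖ * ‖p.2‖ :=
        (continuous_fst.norm.mul continuous_snd.norm).measurable
      exact Real.continuous_sqrt.measurable.comp
        (measurable_const.sub ((h1.div h2).pow_const 2))
    rw [hSdef, Set.setOf_and, Set.setOf_and]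
    exact ((isClosed_le continuous_fst.norm continuous_const).measurableSet).inter
      (((isClosed_le continuous_snd.norm continuous_const).measurableSet).inter
        (measurableSet_le hg measurable_const))
  set B : ℝ≥0∞ := ENNReal.ofReal (2 * Rj) * ENNReal.ofReal (2 * (δ * Rj)) ^ m with hB
  have hslice : ∀ ξ : E, ξ ≠ 0 →
      volume (Prod.mk ξ ⁻¹' S) ≤ (closedBall (0:E) Ri).indicator (fun _ => B) ξ := by
    intro ξ hξ
    by_cases hmem : ξ ∈ closedBall (0:E) Ri
    · rw [Set.indicator_of_mem hmem]
      set u : E := ‖ξ‖⁻¹ • ξ with hudef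
      have hu : ‖u‖ = 1 := norm_smul_inv_norm hξ
      refine le_trans (measure_mono ?_) (tube_volume_bound u hu Rj (δ * Rj))
      rintro η ⟨hη1, hη2, hη3⟩
      have hδRj : 0 ≤ δ * Rj := le_of_lt (by positivity)
      constructor
      · calc |⟪u, η⟫| ≤ ‖u‖ * ‖η‖ := abs_real_inner_le_norm _ _
          _ = ‖η‖ := by rw [hu, one_mul]
          _ ≤ Rj := hη2
      · by_cases hη : η = 0
        · simp only [Set.mem_setOf_eq, hη, inner_zero_right, zero_smul, sub_zero, norm_zero]
          exact hδRj
        · set t : ℝ := ⟪ξ, η⟫ / (‖ξ‖ * ‖η‖) with ht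
          have hξn : (0:ℝ) < ‖ξ‖ := norm_pos_iff.2 hξ
          have hηn : (0:ℝ) < ‖η‖ := norm_pos_iff.2 hη
          have hct : ⟪u, η⟫ = ‖η‖ * t := by
            rw [hudef, real_inner_smul_left, ht]
            field_simp
          have h1 : ‖η - ⟪u, η⟫ • u‖ ^ 2 = ‖η‖ ^ 2 - ⟪u, η⟫ ^ 2 := by
            rw [norm_sub_sq_real, real_inner_smul_right, real_inner_comm η u, norm_smul, hu,
              mul_one, Real.norm_eq_abs, sq_abs]
            ring
          have h2 : ‖η - ⟪u, η⟫ • u‖ ^ 2 = ‖η‖ ^ 2 * (1 - t ^ 2) := by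
            rw [h1, hct]; ring
          have h3 : ‖η - ⟪u, η⟫ • u‖ = ‖η‖ * Real.sqrt (1 - t ^ 2) := by
            have := congrArg Real.sqrt h2
            rwa [Real.sqrt_sq (norm_nonneg _), Real.sqrt_mul (sq_nonneg _),
              Real.sqrt_sq (norm_nonneg _)] at this
          calc ‖η - ⟪u, η⟫ • u‖ = ‖η‖ * Real.sqrt (1 - t ^ 2) := h3
            _ ≤ Rj * δ := mul_le_mul hη2 hη3 (Real.sqrt_nonneg _) (le_of_lt hRjpos)
            _ = δ * Rj := mul_comm _ _
    · rw [Set.indicator_of_notMem hmem]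
      have hempty : Prod.mk ξ ⁻¹' S = ∅ :=
        Set.eq_empty_of_forall_notMem fun η hη =>
          hmem (mem_closedBall_zero_iff.2 hη.1)
      simp [hempty]
  have hae : ∀ᵐ ξ : E ∂volume, ξ ≠ 0 := by
    refine (ae_iff).2 ?_
    simpa using measure_singleton (0 : E)
  have hclosed : closedBall (0:E) Ri ⊆ {x : E | ∀ i, |x i| ≤ Ri} := fun x hx i =>
    (coord_abs_le_norm x i).trans (mem_closedBall_zero_iff.1 hx)
  have hvol : volume S ≤ ENNReal.ofReal (2 * Ri) ^ (m + 1) * B := by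
    calc volume S = ∫⁻ ξ, volume (Prod.mk ξ ⁻¹' S) := by
          rw [Measure.volume_eq_prod, Measure.prod_apply hS]
      _ ≤ ∫⁻ ξ, (closedBall (0:E) Ri).indicator (fun _ => B) ξ := by
          refine lintegral_mono_ae ?_
          filter_upwards [hae] with ξ hξ using hslice ξ hξ
      _ = B * volume (closedBall (0:E) Ri) := by
          rw [lintegral_indicator measurableSet_closedBall, setLIntegral_const]
      _ ≤ B * ENNReal.ofReal (2 * Ri) ^ (m + 1) := by
          refine mul_le_mul_right ?_ B
          calc volume (closedBall (0:E) Ri) ≤ volume {x : E | ∀ i, |x i| ≤ Ri} :=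
                measure_mono hclosed
            _ = ∏ _i : Fin (m+1), ENNReal.ofReal (2 * Ri) := euclidean_box_volume _
            _ = ENNReal.ofReal (2 * Ri) ^ (m + 1) := by
                rw [Finset.prod_const, Finset.card_univ, Fintype.card_fin]
      _ = ENNReal.ofReal (2 * Ri) ^ (m + 1) * B := mul_comm _ _
  refine hvol.trans ?_
  -- now pure arithmetic with powers of two
  have e1 : ENNReal.ofReal (2 * Ri) = (2:ℝ≥0∞) ^ ((i:ℝ) + 2) := by
    rw [← ofReal_two_rpow]
    congr 1
    rw [hRi, show ((i:ℝ) + 2) = (((i + 2 : ℕ)):ℝ) by push_cast; ring, Real.rpow_natCast]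
    ring
  have e2 : ENNReal.ofReal (2 * Rj) = (2:ℝ≥0∞) ^ ((j:ℝ) + 2) := by
    rw [← ofReal_two_rpow]
    congr 1
    rw [hRj, show ((j:ℝ) + 2) = (((j + 2 : ℕ)):ℝ) by push_cast; ring, Real.rpow_natCast]
    ring
  have e3 : ENNReal.ofReal (2 * (δ * Rj)) = (2:ℝ≥0∞) ^ ((j:ℝ) + 3 - k) := by
    rw [← ofReal_two_rpow]
    congr 1
    rw [hδ, hRj]
    rw [show (2:ℝ) ^ (j + 1) = (2:ℝ) ^ ((j:ℝ) + 1) from by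
      rw [show ((j:ℝ) + 1) = (((j + 1 : ℕ)):ℝ) by push_cast; ring, Real.rpow_natCast]]
    rw [show (2:ℝ) * ((2:ℝ) ^ (-(k:ℝ) + 1) * (2:ℝ) ^ ((j:ℝ) + 1))
        = (2:ℝ) ^ (1:ℝ) * ((2:ℝ) ^ (-(k:ℝ) + 1) * (2:ℝ) ^ ((j:ℝ) + 1)) by norm_num]
    rw [← Real.rpow_add two_pos, ← Real.rpow_add two_pos]
    congr 1
    ring
  rw [hB, e1, e2, e3]
  have h2ne0 : (2:ℝ≥0∞) ≠ 0 := by norm_num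
  have h2netop : (2:ℝ≥0∞) ≠ ⊤ := by norm_num
  have lhs_eq : ((2:ℝ≥0∞) ^ ((i:ℝ) + 2)) ^ (m + 1) *
      ((2:ℝ≥0∞) ^ ((j:ℝ) + 2) * ((2:ℝ≥0∞) ^ ((j:ℝ) + 3 - k)) ^ m)
      = (2:ℝ≥0∞) ^ (((i:ℝ) + 2) * (m + 1) + (((j:ℝ) + 2) + ((j:ℝ) + 3 - k) * m)) := by
    rw [← ENNReal.rpow_natCast ((2:ℝ≥0∞) ^ ((i:ℝ) + 2)) (m+1),
      ← ENNReal.rpow_natCast ((2:ℝ≥0∞) ^ ((j:ℝ) + 3 - k)) m,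
      ← ENNReal.rpow_mul, ← ENNReal.rpow_mul,
      ← ENNReal.rpow_add _ _ h2ne0 h2netop, ← ENNReal.rpow_add _ _ h2ne0 h2netop]
    push_cast
    ring_nf
  rw [lhs_eq]
  have rhs_eq : ((2 ^ (6 * (m + 1)) : ℝ≥0) : ℝ≥0∞) * 2 ^ ((i + j) * (m + 1)) *
      (2:ℝ≥0∞) ^ (-((k : ℤ) * (((m + 1 : ℕ) : ℤ) - 1)))
      = (2:ℝ≥0∞) ^ ((6 * (m + 1) : ℝ) + ((i + j) * (m + 1) : ℝ) + (-((k:ℝ) * m))) := by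
    rw [ENNReal.coe_pow, ENNReal.coe_ofNat,
      ← ENNReal.rpow_natCast (2:ℝ≥0∞) (6 * (m + 1)),
      ← ENNReal.rpow_natCast (2:ℝ≥0∞) ((i + j) * (m + 1)),
      ← ENNReal.rpow_intCast (2:ℝ≥0∞) (-((k : ℤ) * (((m + 1 : ℕ) : ℤ) - 1))),
      ← ENNReal.rpow_add _ _ h2ne0 h2netop, ← ENNReal.rpow_add _ _ h2ne0 h2netop]
    congr 1
    push_cast
    ring
  rw [rhs_eq]
  refine ENNReal.rpow_le_rpow_of_exponent_le one_le_two ?_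
  have him : (1:ℝ) ≤ i := by exact_mod_cast hi
  have hjm : (1:ℝ) ≤ j := by exact_mod_cast hj
  have hmm : (1:ℝ) ≤ m := by exact_mod_cast hm
  nlinarith [sq_nonneg ((m:ℝ)), sq_nonneg ((i:ℝ)), sq_nonneg ((j:ℝ))]
end
end
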